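/- Suppose F : X → ℝ^d is linear (F(x) = Ax for some matrix A) and satisfies ⟨F(x), x⟩ = 0 for all x ∈ X, where X is convex and compact. Then the Minty condition holds: there exists x ∈ X such that ⟨F(x'), x' - x⟩ ≥ 0 for all x' ∈ X. -/

import Mathlib

open scoped RealInnerProductSpace

lemma minty_finite {d : ℕ} (X : Set (EuclideanSpace ℝ (Fin d)))
    (hne : X.Nonempty) (hconv : Convex ℝ X)
    (A : EuclideanSpace ℝ (Fin d) →ₗ[ℝ] EuclideanSpace ℝ (Fin d))
    (hzero : ∀ x ∈ X, ⟪A x, x⟫ = 0)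
    (s : Finset (EuclideanSpace ℝ (Fin d))) (hs : ↑s ⊆ X) :
    ∃ x ∈ X, ∀ y ∈ s, ⟪A y, x⟫ ≤ 0 := by
  classical
  rcases s.eq_empty_or_nonempty with rfl | ⟨y₀, hy₀⟩
  · obtain ⟨x, hx⟩ := hne
    exact ⟨x, hx, by simp⟩
  set T : EuclideanSpace ℝ (Fin d) →ₗ[ℝ] (↥s → ℝ) :=
    LinearMap.pi (fun y => -((innerSL ℝ (A (y : EuclideanSpace ℝ (Fin d)))).toLinearMap))
    with hT
  have hTapp : ∀ x (y : ↥s), T x y = -⟪A (y : EuclideanSpace ℝ (Fin d)), x⟫ := by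
    intro x y; rfl
  set K : Set (↥s → ℝ) := T '' (convexHull ℝ (↑s : Set (EuclideanSpace ℝ (Fin d)))) with hK
  set P : Set (↥s → ℝ) := {v | ∀ y, 0 ≤ v y} with hP
  have hKconv : Convex ℝ K := (convex_convexHull ℝ _).linear_image T
  have hKcomp : IsCompact K := by
    have h1 : IsCompact (convexHull ℝ (↑s : Set (EuclideanSpace ℝ (Fin d)))) :=
      s.finite_toSet.isCompact_convexHull (𝕜 := ℝ)
    exact h1.image T.continuous_of_finiteDimensional
  have hPconv : Convex ℝ P := by
    intro v hv w hw a b ha hb hab y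
    exact add_nonneg (mul_nonneg ha (hv y)) (mul_nonneg hb (hw y))
  have hPclosed : IsClosed P := by
    have : P = ⋂ y : ↥s, (fun v : ↥s → ℝ => v y) ⁻¹' Set.Ici 0 := by
      ext v; simp [hP, Set.mem_iInter]
    rw [this]
    exact isClosed_iInter fun y => (isClosed_Ici).preimage (continuous_apply y)
  have hsub : convexHull ℝ (↑s : Set (EuclideanSpace ℝ (Fin d))) ⊆ X :=
    convexHull_min hs hconv
  by_contra hcon
  push_neg at hcon
  have hdisj : Disjoint K P := by
    rw [Set.disjoint_left]
    rintro v ⟨x, hx, rfl⟩ hvP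
    have hxX : x ∈ X := hsub hx
    obtain ⟨y, hy, hlt⟩ := hcon x hxX
    have := hvP ⟨y, hy⟩
    rw [hTapp] at this
    linarith
  obtain ⟨f, a, b, hfa, hab, hfb⟩ :=
    geometric_hahn_banach_compact_closed hKconv hKcomp hPconv hPclosed hdisj
  have hb0 : b < 0 := by
    have := hfb 0 (fun y => le_rfl)
    simpa using this
  have hfP : ∀ v ∈ P, 0 ≤ f v := by
    intro v hv
    by_contra hneg
    push_neg at hneg
    have ht : (0:ℝ) < 2 * b / f v := by
      apply div_pos_of_neg_of_neg
      · linarith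
      · exact hneg
    have hmem : (2 * b / f v) • v ∈ P := fun y =>
      mul_nonneg ht.le (hv y)
    have h2 := hfb _ hmem
    rw [map_smul] at h2
    have h3 : b < 2 * b / f v * f v := h2
    rw [div_mul_cancel₀] at h3
    · linarith
    · exact hneg.ne
  set c : ↥s → ℝ := fun y => f (Pi.single y 1) with hc
  have hc0 : ∀ y, 0 ≤ c y := by
    intro y
    apply hfP
    intro z
    by_cases h : y = z
    · subst h; simp
    · simp [Pi.single_apply, h]
  have hfv : ∀ v : ↥s → ℝ, f v = ∑ y, v y * c y := by
    intro v
    have hv : v = ∑ y, v y • (Pi.single y (1:ℝ) : ↥s → ℝ) := by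
      funext z
      simp [Pi.single_apply, Finset.sum_apply]
    conv_lhs => rw [hv]
    rw [map_sum]
    congr 1; funext y
    rw [map_smul]
    simp [hc, smul_eq_mul]
  have hy₀K : T y₀ ∈ K := ⟨y₀, subset_convexHull ℝ _ hy₀, rfl⟩
  have hcsum : 0 < ∑ y, c y := by
    rcases (Finset.sum_nonneg fun y _ => hc0 y).lt_or_eq with h | h
    · exact h
    · exfalso
      have hcall : ∀ y : ↥s, c y = 0 := fun y =>
        (Finset.sum_eq_zero_iff_of_nonneg (fun y _ => hc0 y)).mp h.symm y (Finset.mem_univ y)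
      have hf0 : f (T y₀) = 0 := by
        rw [hfv]; simp [hcall]
      have := hfa _ hy₀K
      rw [hf0] at this
      linarith
  set x₀ : EuclideanSpace ℝ (Fin d) := Finset.univ.centerMass c Subtype.val with hx₀
  have hx₀mem : x₀ ∈ convexHull ℝ (↑s : Set (EuclideanSpace ℝ (Fin d))) :=
    Finset.centerMass_mem_convexHull _ (fun i _ => hc0 i) hcsum (fun i _ => i.2)
  have hsum : (∑ y, c y) • x₀ = ∑ y, c y • (y : EuclideanSpace ℝ (Fin d)) := by
    rw [hx₀, Finset.centerMass, smul_inv_smul₀ hcsum.ne']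
  have hterm : ∀ y : ↥s, T x₀ y * c y = -⟪A (c y • (y : EuclideanSpace ℝ (Fin d))), x₀⟫ := by
    intro y
    rw [hTapp, map_smul, real_inner_smul_left]
    ring
  have hf0 : f (T x₀) = 0 := by
    rw [hfv]
    calc ∑ y, T x₀ y * c y
        = ∑ y : ↥s, -⟪A (c y • (y : EuclideanSpace ℝ (Fin d))), x₀⟫ :=
          Finset.sum_congr rfl (fun y _ => hterm y)
      _ = -⟪A ((∑ y, c y) • x₀), x₀⟫ := by
          rw [hsum, map_sum, sum_inner, Finset.sum_neg_distrib]
      _ = 0 := by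
          rw [map_smul, real_inner_smul_left, hzero x₀ (hsub hx₀mem), mul_zero, neg_zero]
  have hx₀K : T x₀ ∈ K := ⟨x₀, hx₀mem, rfl⟩
  have := hfa _ hx₀K
  rw [hf0] at this
  linarith

theorem linear_zero_implies_minty {d : ℕ} (X : Set (EuclideanSpace ℝ (Fin d)))
    (hne : X.Nonempty) (hconv : Convex ℝ X) (hcomp : IsCompact X)
    (A : EuclideanSpace ℝ (Fin d) →ₗ[ℝ] EuclideanSpace ℝ (Fin d))
    (hzero : ∀ x ∈ X, ⟪A x, x⟫ = 0) :
    ∃ x ∈ X, ∀ x' ∈ X, 0 ≤ ⟪A x', x' - x⟫ := by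
  classical
  set Z : ↥X → Set (EuclideanSpace ℝ (Fin d)) :=
    fun y => {x | ⟪A (y : EuclideanSpace ℝ (Fin d)), x⟫ ≤ 0} with hZ
  have hZc : ∀ y, IsClosed (Z y) := fun y =>
    isClosed_le (innerSL ℝ (A (y : EuclideanSpace ℝ (Fin d)))).continuous continuous_const
  have hmain : (X ∩ ⋂ y, Z y).Nonempty := by
    by_contra h
    rw [Set.not_nonempty_iff_eq_empty] at h
    obtain ⟨t, ht⟩ := hcomp.elim_finite_subfamily_closed Z hZc h
    obtain ⟨x, hxX, hx⟩ := minty_finite X hne hconv A hzero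
      (t.image Subtype.val) (by intro y hy; simp at hy; obtain ⟨hyX, _⟩ := hy; exact hyX)
    have : x ∈ X ∩ ⋂ y ∈ t, Z y := by
      refine ⟨hxX, ?_⟩
      simp only [Set.mem_iInter]
      intro y hy
      exact hx ↑y (Finset.mem_image_of_mem _ hy)
    rw [ht] at this
    exact this
  obtain ⟨x, hxX, hx⟩ := hmain
  refine ⟨x, hxX, fun x' hx' => ?_⟩
  have h1 : ⟪A x', x⟫ ≤ 0 := by
    have := Set.mem_iInter.mp hx ⟨x', hx'⟩
    exact this
  rw [inner_sub_right, hzero x' hx']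
  linarith
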